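/- If T is a k-bounded perturbation of S, then every element is displaced by at most k positions: if s_i occupies position p in T, then |p - i| ≤ k. -/

import Mathlib

lemma aux_bound {n k : ℕ} (f : Fin n → Fin n) (hf : Function.Injective f)
    (hk : ∀ i j : Fin n, (i : ℕ) < (j : ℕ) → (f j : ℕ) < (f i : ℕ) → (j : ℕ) - (i : ℕ) ≤ k)
    (i : Fin n) : (f i : ℕ) ≤ (i : ℕ) + k ∧ (i : ℕ) ≤ (f i : ℕ) + k := by
  have hb : Function.Bijective f := Finite.injective_iff_bijective.mp hf
  -- card of { j | f j < f i } = f i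
  have hcard : (Finset.univ.filter fun j => (f j : ℕ) < (f i : ℕ)).card = (f i : ℕ) := by
    have heq : (Finset.univ.filter fun j => (f j : ℕ) < (f i : ℕ)).card
        = (Finset.Iio (f i)).card := by
      apply Finset.card_bij (fun j _ => f j)
      · intro a ha
        simp only [Finset.mem_filter] at ha
        exact Finset.mem_Iio.mpr (Fin.lt_def.mpr ha.2)
      · intro a _ b _ hab; exact hf hab
      · intro b hb'
        obtain ⟨a, rfl⟩ := hb.2 b
        exact ⟨a, Finset.mem_filter.mpr ⟨Finset.mem_univ a,
          Fin.lt_def.mp (Finset.mem_Iio.mp hb')⟩, rfl⟩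
    rw [heq, Fin.card_Iio]
  constructor
  · -- f i ≤ i + k
    have hsub : (Finset.univ.filter fun j => (f j : ℕ) < (f i : ℕ)) ⊆
        ((Finset.univ.filter fun j : Fin n => (j : ℕ) ≤ (i : ℕ) + k).erase i) := by
      intro j hj
      simp only [Finset.mem_filter, Finset.mem_univ, true_and] at hj
      rw [Finset.mem_erase]
      refine ⟨fun hji => by simp [hji] at hj, ?_⟩
      simp only [Finset.mem_filter, Finset.mem_univ, true_and]
      rcases le_or_gt (j : ℕ) (i : ℕ) with hle | hlt
      · omega
      · have := hk i j hlt hj; omega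
    have h1 : (Finset.univ.filter fun j : Fin n => (j : ℕ) ≤ (i : ℕ) + k).card ≤ (i : ℕ) + k + 1 := by
      have := Finset.card_le_card_of_injOn (f := Fin.val)
        (s := Finset.univ.filter fun j : Fin n => (j : ℕ) ≤ (i : ℕ) + k)
        (t := Finset.range ((i : ℕ) + k + 1))
        (fun a ha => Finset.mem_range.mpr
          (by have := (Finset.mem_filter.mp ha).2; omega))
        (fun a _ b _ hab => Fin.val_injective hab)
      simpa using this
    have hi : i ∈ (Finset.univ.filter fun j : Fin n => (j : ℕ) ≤ (i : ℕ) + k) :=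
      Finset.mem_filter.mpr ⟨Finset.mem_univ i, by omega⟩
    have := Finset.card_le_card hsub
    rw [hcard, Finset.card_erase_of_mem hi] at this
    omega
  · -- i ≤ f i + k
    have hc1 : (Finset.univ.filter fun j : Fin n => (j : ℕ) < (i : ℕ)).card = (i : ℕ) := by
      have heq : (Finset.univ.filter fun j : Fin n => (j : ℕ) < (i : ℕ)) = Finset.Iio i := by
        ext j
        simp only [Finset.mem_filter, Finset.mem_univ, true_and, Finset.mem_Iio, Fin.lt_def]
      rw [heq, Fin.card_Iio]
    have hsub : (Finset.univ.filter fun j : Fin n => (j : ℕ) < (i : ℕ)) ⊆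
        (Finset.univ.filter fun j => (f j : ℕ) < (f i : ℕ)) ∪
        (Finset.univ.filter fun j : Fin n => (i : ℕ) - k ≤ (j : ℕ) ∧ (j : ℕ) < (i : ℕ)) := by
      intro j hj
      simp only [Finset.mem_filter, Finset.mem_univ, true_and] at hj
      rcases lt_or_ge (f j : ℕ) (f i : ℕ) with hlt | hle
      · exact Finset.mem_union_left _ (Finset.mem_filter.mpr ⟨Finset.mem_univ j, hlt⟩)
      · have hne : f j ≠ f i := fun hEq => by
          have : j = i := hf hEq
          omega
        have hlt' : (f i : ℕ) < (f j : ℕ) := by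
          rcases lt_or_eq_of_le hle with h' | h'
          · exact h'
          · exact absurd (Fin.ext h'.symm) hne
        have := hk j i hj hlt'
        exact Finset.mem_union_right _ (Finset.mem_filter.mpr ⟨Finset.mem_univ j, by omega⟩)
    have h2 : (Finset.univ.filter fun j : Fin n =>
        (i : ℕ) - k ≤ (j : ℕ) ∧ (j : ℕ) < (i : ℕ)).card ≤ k := by
      have := Finset.card_le_card_of_injOn (f := Fin.val)
        (s := Finset.univ.filter fun j : Fin n => (i : ℕ) - k ≤ (j : ℕ) ∧ (j : ℕ) < (i : ℕ))
        (t := Finset.Ico ((i : ℕ) - k) (i : ℕ))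
        (fun a ha => Finset.mem_Ico.mpr
          (by have := (Finset.mem_filter.mp ha).2; omega))
        (fun a _ b _ hab => Fin.val_injective hab)
      rw [Nat.card_Ico] at this
      omega
    have := (Finset.card_le_card hsub).trans (Finset.card_union_le _ _)
    rw [hc1, hcard] at this
    omega

/-- T is a k-bounded perturbation of S: T is a permutation of S and whenever the pair
of positions i < j of S is inverted in T (i.e. S's j-th entry appears before its i-th
entry in T), then j - i <= k. -/
def IsKBoundedPerturbation {α : Type*} [DecidableEq α] (k : ℕ) (S T : List α) : Prop :=
  T.Perm S ∧ ∀ i j : Fin S.length, (i : ℕ) < (j : ℕ) →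
    T.idxOf (S.get j) < T.idxOf (S.get i) → (j : ℕ) - (i : ℕ) ≤ k

/-- in a k-bounded perturbation, every element is displaced by at most k
positions: if the i-th entry of S occupies position p in T, then |p - i| ≤ k. -/
theorem stmt3 {α : Type*} [DecidableEq α] (k : ℕ) (S T : List α) (hS : S.Nodup)
    (h : IsKBoundedPerturbation k S T) :
    ∀ i : Fin S.length, |(T.idxOf (S.get i) : ℤ) - (i : ℕ)| ≤ (k : ℤ) := by
  obtain ⟨hperm, hinv⟩ := h
  have hlen : T.length = S.length := hperm.length_eq
  have hmem : ∀ i : Fin S.length, S.get i ∈ T := fun i =>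
    hperm.mem_iff.mpr (S.get_mem _)
  set n := S.length with hn
  set f : Fin n → Fin n := fun i => ⟨T.idxOf (S.get i),
    hlen ▸ List.idxOf_lt_length_iff.mpr (hmem i)⟩ with hf
  have hgetinj : Function.Injective S.get := List.nodup_iff_injective_get.mp hS
  have hfinj : Function.Injective f := by
    intro a b hab
    apply hgetinj
    exact (List.idxOf_inj (hmem a)).mp (congrArg Fin.val hab)
  intro i
  have := aux_bound f hfinj (fun i j hij hfji => hinv i j hij hfji) i
  have hfi : (f i : ℕ) = T.idxOf (S.get i) := rfl
  rw [abs_le]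
  omega
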